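/- Let V^+, V^- be Q-graded vector spaces with subspaces B_r^± ⊂ V^± for r ∈ Q, and suppose a pairing ⟨·,·⟩: V^+ × V^- → F satisfies the orthogonality property ⟨∏→_r a_r, ∏→_r b_r⟩ = ∏_r ⟨a_r, b_r⟩ for a_r ∈ B_r^+, b_r ∈ B_r^- (almost all equal to 1), where ∏→ denotes products in increasing order of r. If the pairing on V^+ × V^- is non-degenerate and the multiplication maps ⊗→_r B_r^± → V^± are surjective, then each restricted pairing B_r^+ × B_r^- → F is non-degenerate. -/

import Mathlib

noncomputable section

/-- The product `a_{r_1} ⋯ a_{r_k}` taken in increasing order of `r`, where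
`r_1 < … < r_k` are the elements of `rs`. -/
def orderedProd {A : Type} [Monoid A] (rs : Finset ℚ) (a : ℚ → A) : A :=
  ((rs.sort (· ≤ ·)).map a).prod

lemma listprod_single {A : Type} [Monoid A] (a : ℚ → A) (r : ℚ) :
    ∀ l : List ℚ, l.Nodup → r ∈ l → (∀ s ∈ l, s ≠ r → a s = 1) →
      (l.map a).prod = a r := by
  intro l
  induction l with
  | nil => simp
  | cons s t ih =>
    intro hnd hr hone
    simp only [List.map_cons, List.prod_cons]
    rcases List.mem_cons.1 hr with h | h
    · subst h
      have : ∀ u ∈ t, a u = 1 := by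
        intro u hu
        exact hone u (List.mem_cons_of_mem _ hu) (fun e => (List.nodup_cons.1 hnd).1 (e ▸ hu))
      rw [List.prod_eq_one (by simpa using this), mul_one]
    · rw [hone s List.mem_cons_self (fun e => (List.nodup_cons.1 hnd).1 (e ▸ h)), one_mul]
      exact ih (List.nodup_cons.1 hnd).2 h (fun u hu => hone u (List.mem_cons_of_mem _ hu))

lemma orderedProd_single {A : Type} [Monoid A] (a : ℚ → A) (r : ℚ) (rs : Finset ℚ)
    (hr : r ∈ rs) (hone : ∀ s, s ≠ r → a s = 1) : orderedProd rs a = a r :=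
  listprod_single a r _ (rs.sort_nodup _) ((Finset.mem_sort _).2 hr) (fun s _ => hone s)

lemma listprod_filter {A : Type} [Monoid A] (b : ℚ → A) (r : ℚ) (hb : b r = 1) :
    ∀ l : List ℚ, (l.map b).prod = ((l.filter (· ≠ r)).map b).prod := by
  intro l
  induction l with
  | nil => simp
  | cons s t ih =>
    by_cases h : s = r
    · subst h; simpa [hb, List.filter_cons] using ih
    · simp [List.filter_cons, h, ih]

lemma sort_insert_filter (r : ℚ) (rs : Finset ℚ) (hr : r ∉ rs) :
    ((insert r rs).sort (· ≤ ·)).filter (· ≠ r) = rs.sort (· ≤ ·) := by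
  refine (fun (hp : List.Perm _ _) h1 h2 => List.Perm.eq_of_pairwise' (r := (· ≤ ·)) h1 h2 hp) ?_ ?_ ?_
  · rw [List.perm_ext_iff_of_nodup (List.Nodup.filter _ ((insert r rs).sort_nodup _))
      (rs.sort_nodup _)]
    intro s
    simp only [List.mem_filter, Finset.mem_sort, Finset.mem_insert, decide_eq_true_eq]
    constructor
    · rintro ⟨h1 | h1, h2⟩
      · simp at h2; exact absurd h1 h2
      · exact h1
    · intro h; exact ⟨Or.inr h, by simp; rintro rfl; exact hr h⟩
  · exact List.Pairwise.filter _ ((insert r rs).pairwise_sort _)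
  · exact rs.pairwise_sort _

lemma orderedProd_insert_one {A : Type} [Monoid A] (b : ℚ → A) (r : ℚ) (rs : Finset ℚ)
    (hr : r ∉ rs) (hb : b r = 1) : orderedProd (insert r rs) b = orderedProd rs b := by
  unfold orderedProd
  rw [listprod_filter b r hb, sort_insert_filter r rs hr]

lemma orderedProd_congr {A : Type} [Monoid A] (b b' : ℚ → A) (rs : Finset ℚ)
    (h : ∀ s ∈ rs, b s = b' s) : orderedProd rs b = orderedProd rs b' := by
  unfold orderedProd
  congr 1
  exact List.map_congr_left (fun s hs => h s ((Finset.mem_sort _).1 hs))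

/-- Let `B_r^± ⊆ A^±` be subalgebras (`r ∈ ℚ`) and `⟨·,·⟩ : A⁺ × A⁻ → F`
a pairing satisfying `⟨∏→ a_r, ∏→ b_r⟩ = ∏ ⟨a_r, b_r⟩` on ordered products of elements
`a_r ∈ B_r⁺`, `b_r ∈ B_r⁻` (almost all equal to `1`). If the pairing is non-degenerate and
the multiplication maps `⊗→ B_r^± → A^±` are surjective (ordered products span), then each
restricted pairing `B_r⁺ × B_r⁻ → F` is non-degenerate. -/
theorem restricted_pairing_nondegenerate
    (F Ap Am : Type) [Field F] [Ring Ap] [Algebra F Ap] [Ring Am] [Algebra F Am]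
    (P : Ap →ₗ[F] Am →ₗ[F] F)
    (Bp : ℚ → Subalgebra F Ap) (Bm : ℚ → Subalgebra F Am)
    (hmult : ∀ (rs : Finset ℚ) (a : ℚ → Ap) (b : ℚ → Am),
      (∀ r, a r ∈ Bp r) → (∀ r, b r ∈ Bm r) →
      (∀ r ∉ rs, a r = 1) → (∀ r ∉ rs, b r = 1) →
      P (orderedProd rs a) (orderedProd rs b) = ∏ r ∈ rs, P (a r) (b r))
    (hndp : ∀ x : Ap, (∀ y : Am, P x y = 0) → x = 0)
    (hndm : ∀ y : Am, (∀ x : Ap, P x y = 0) → y = 0)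
    (hsurjp : Submodule.span F {x : Ap |
        ∃ (rs : Finset ℚ) (a : ℚ → Ap), (∀ r, a r ∈ Bp r) ∧ x = orderedProd rs a} = ⊤)
    (hsurjm : Submodule.span F {y : Am |
        ∃ (rs : Finset ℚ) (b : ℚ → Am), (∀ r, b r ∈ Bm r) ∧ y = orderedProd rs b} = ⊤) :
    ∀ r : ℚ,
      (∀ x ∈ Bp r, (∀ y ∈ Bm r, P x y = 0) → x = 0) ∧
      (∀ y ∈ Bm r, (∀ x ∈ Bp r, P x y = 0) → y = 0) := by
  intro r
  constructor
  · intro x hx h0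
    apply hndp
    have hker : ∀ y ∈ Submodule.span F {y : Am |
        ∃ (rs : Finset ℚ) (b : ℚ → Am), (∀ r, b r ∈ Bm r) ∧ y = orderedProd rs b},
        P x y = 0 := by
      intro y hy
      refine Submodule.span_induction ?_ (by simp) (fun u v _ _ hu hv => by simp [hu, hv])
        (fun c u _ hu => by simp [hu]) hy
      rintro y ⟨rs, b, hb, rfl⟩
      set a' : ℚ → Ap := fun s => if s = r then x else 1 with ha'
      set b' : ℚ → Am := fun s => if s ∈ rs then b s else 1 with hb'
      have h1 : orderedProd (insert r rs) a' = x := by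
        rw [orderedProd_single a' r _ (Finset.mem_insert_self r rs)
          (fun s hs => by simp [ha', hs])]
        simp [ha']
      have h2 : orderedProd (insert r rs) b' = orderedProd rs b := by
        by_cases hr : r ∈ rs
        · rw [Finset.insert_eq_self.2 hr]
          exact orderedProd_congr _ _ _ (fun s hs => by simp [hb', hs])
        · rw [orderedProd_insert_one b' r rs hr (by simp [hb', hr])]
          exact orderedProd_congr _ _ _ (fun s hs => by simp [hb', hs])
      have := hmult (insert r rs) a' b'
        (fun s => by by_cases h : s = r <;> simp [ha', h, hx, Subalgebra.one_mem])
        (fun s => by by_cases h : s ∈ rs <;> simp [hb', h, hb s, Subalgebra.one_mem])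
        (fun s hs => by
          have hne : s ≠ r := fun h => hs (h ▸ Finset.mem_insert_self r rs)
          simp [ha', hne])
        (fun s hs => by
          have hns : s ∉ rs := fun h => hs (Finset.mem_insert_of_mem h)
          simp [hb', hns])
      rw [h1, h2] at this
      rw [this]
      apply Finset.prod_eq_zero (Finset.mem_insert_self r rs)
      have : a' r = x := by simp [ha']
      rw [this]
      by_cases hr : r ∈ rs
      · exact h0 _ (by simpa [hb', hr] using hb r)
      · exact h0 _ (by simp [hb', hr, Subalgebra.one_mem])
    intro y
    exact hker y (by rw [hsurjm]; trivial)
  · intro y hy h0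
    apply hndm
    have hker : ∀ x ∈ Submodule.span F {x : Ap |
        ∃ (rs : Finset ℚ) (a : ℚ → Ap), (∀ r, a r ∈ Bp r) ∧ x = orderedProd rs a},
        P x y = 0 := by
      intro x hx
      refine Submodule.span_induction ?_ (by simp) (fun u v _ _ hu hv => by simp [hu, hv])
        (fun c u _ hu => by simp [hu]) hx
      rintro x ⟨rs, a, ha, rfl⟩
      set b' : ℚ → Am := fun s => if s = r then y else 1 with hb'
      set a' : ℚ → Ap := fun s => if s ∈ rs then a s else 1 with ha'
      have h1 : orderedProd (insert r rs) b' = y := by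
        rw [orderedProd_single b' r _ (Finset.mem_insert_self r rs)
          (fun s hs => by simp [hb', hs])]
        simp [hb']
      have h2 : orderedProd (insert r rs) a' = orderedProd rs a := by
        by_cases hr : r ∈ rs
        · rw [Finset.insert_eq_self.2 hr]
          exact orderedProd_congr _ _ _ (fun s hs => by simp [ha', hs])
        · rw [orderedProd_insert_one a' r rs hr (by simp [ha', hr])]
          exact orderedProd_congr _ _ _ (fun s hs => by simp [ha', hs])
      have := hmult (insert r rs) a' b'
        (fun s => by by_cases h : s ∈ rs <;> simp [ha', h, ha s, Subalgebra.one_mem])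
        (fun s => by by_cases h : s = r <;> simp [hb', h, hy, Subalgebra.one_mem])
        (fun s hs => by
          have hns : s ∉ rs := fun h => hs (Finset.mem_insert_of_mem h)
          simp [ha', hns])
        (fun s hs => by
          have hne : s ≠ r := fun h => hs (h ▸ Finset.mem_insert_self r rs)
          simp [hb', hne])
      rw [h1, h2] at this
      rw [this]
      apply Finset.prod_eq_zero (Finset.mem_insert_self r rs)
      have hbr : b' r = y := by simp [hb']
      rw [hbr]
      by_cases hr : r ∈ rs
      · exact h0 _ (by simpa [ha', hr] using ha r)
      · exact h0 _ (by simp [ha', hr, Subalgebra.one_mem])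
    intro x
    exact hker x (by rw [hsurjp]; trivial)

end
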